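/- The double isotropy groups for k = p, p+1, p+2 coincide as subgroups of GL(V): G_{X,Y}(𝔄_p) = G_{X,Y}(𝔄_{p+1}) = G_{X,Y}(𝔄_{p+2}), where G_{X,Y}(𝔄_k) := {g ∈ G(𝔄_k) : gX = X and gY = Y}. -/

import Mathlib

/-- Index type for the basis {X, Y, Z_1,...,Z_p, Ỹ, Z̃_1,...,Z̃_p} of V = ℝ^{3+2p}. -/
inductive Idx (p : ℕ) : Type where
  | X : Idx p
  | Y : Idx p
  | Z : Fin p → Idx p
  | Yt : Idx p
  | Zt : Fin p → Idx p
  deriving DecidableEq, Fintype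

/-- V := ℝ^{3+2p}, realized as functions on the index set. -/
abbrev V (p : ℕ) : Type := Idx p → ℝ

/-- The basis vectors of `V p`. -/
noncomputable def e (p : ℕ) (a : Idx p) : V p := fun b => if b = a then 1 else 0

/-- `T p k` is the totally symmetric multilinear form (with the first two of its `k+2`
arguments singled out) so that `B^k(u,v,w,x;η) = u_X x_X T(v,w,η) - ...`.
For `1 ≤ k ≤ p` its nonzero components are: one argument is `Z_k`, the others `Y`;
for `k = 0` the nonzero components are `T(Y,Ỹ) = T(Z_i,Z̃_i) = 1`;
for `k > p` (used for `k = p+1, p+2`) the only nonzero component has all arguments `Y`. -/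
noncomputable def T (p k : ℕ) (a b : V p) (η : Fin k → V p) : ℝ :=
  if hk : 1 ≤ k ∧ k ≤ p then
    (a (Idx.Z ⟨k - 1, by omega⟩) * b Idx.Y + a Idx.Y * b (Idx.Z ⟨k - 1, by omega⟩)) *
        ∏ j, η j Idx.Y +
      a Idx.Y * b Idx.Y *
        ∑ j, η j (Idx.Z ⟨k - 1, by omega⟩) * ∏ l ∈ Finset.univ.erase j, η l Idx.Y
  else if k = 0 then
    a Idx.Y * b Idx.Yt + b Idx.Y * a Idx.Yt +
      ∑ i : Fin p, (a (Idx.Z i) * b (Idx.Zt i) + b (Idx.Z i) * a (Idx.Zt i))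
  else a Idx.Y * b Idx.Y * ∏ j, η j Idx.Y

/-- The tensor `B^k ∈ ⊗^{4+k} V*`: it has the curvature symmetries in the first four
arguments, is totally symmetric in the last `k`, and its nonzero components on basis
vectors, up to these symmetries, are exactly those prescribed in the paper:
`B⁰(X,Y,Ỹ,X) = B⁰(X,Z_i,Z̃_i,X) = 1`;
`B^k(X,Y,Z_k,X;Y,…,Y) = B^k(X,Y,Y,X;Z_k,Y,…,Y) = … = B^k(X,Y,Y,X;Y,…,Y,Z_k) = 1` for `1 ≤ k ≤ p`;
`B^{p+1}(X,Y,Y,X;Y,…,Y) = 1` and `B^{p+2}(X,Y,Y,X;Y,…,Y) = 1`. -/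
noncomputable def Bc (p k : ℕ) (u v w x : V p) (η : Fin k → V p) : ℝ :=
  u Idx.X * x Idx.X * T p k v w η - u Idx.X * w Idx.X * T p k v x η -
    v Idx.X * x Idx.X * T p k u w η + v Idx.X * w Idx.X * T p k u x η

/-- `GA p k g` means `g ∈ G(𝔄_k)`, i.e. the invertible linear map `g` of `V` satisfies
`g* B^i = B^i` for all `0 ≤ i ≤ k`. -/
def GA (p k : ℕ) (g : V p ≃ₗ[ℝ] V p) : Prop :=
  ∀ i, i ≤ k → ∀ u v w x : V p, ∀ η : Fin i → V p,
    Bc p i (g u) (g v) (g w) (g x) (fun j => g (η j)) = Bc p i u v w x η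

lemma T1eq (p : ℕ) (hp : 1 ≤ p) (a b : V p) (η : Fin 1 → V p) :
    T p 1 a b η = (a (Idx.Z ⟨0, hp⟩) * b Idx.Y + a Idx.Y * b (Idx.Z ⟨0, hp⟩)) * η 0 Idx.Y +
      a Idx.Y * b Idx.Y * η 0 (Idx.Z ⟨0, hp⟩) := by
  rw [T, dif_pos ⟨le_refl 1, hp⟩]
  simp

lemma Tbig (p i : ℕ) (hpi : p < i) (a b : V p) (η : Fin i → V p) :
    T p i a b η = a Idx.Y * b Idx.Y * ∏ j, η j Idx.Y := by
  rw [T, dif_neg (by omega), if_neg (by omega)]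

lemma coords (p : ℕ) (hp : 1 ≤ p) (g : V p ≃ₗ[ℝ] V p)
    (h1 : ∀ u v w x : V p, ∀ η : Fin 1 → V p,
      Bc p 1 (g u) (g v) (g w) (g x) (fun j => g (η j)) = Bc p 1 u v w x η)
    (hX : g (e p Idx.X) = e p Idx.X) (hY : g (e p Idx.Y) = e p Idx.Y) :
    (∀ u, g u Idx.X = u Idx.X) ∧ (∀ u, g u Idx.Y = u Idx.Y) := by
  set Z0 : Idx p := Idx.Z ⟨0, hp⟩ with hZ0
  have hA : ∀ w : V p, g w Z0 = w Z0 := by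
    intro w
    have h := h1 (e p Idx.X) (e p Idx.Y) w (e p Idx.X) (fun _ => e p Idx.Y)
    simp only [hX, hY] at h
    simp only [Bc, T1eq p hp, e] at h
    simpa using h
  have hB : g (e p Z0) Idx.Y = 0 := by
    have h := h1 (e p Idx.X) (e p Idx.Y) (e p Z0) (e p Idx.X) (fun _ => e p Z0)
    simp only [hX, hY] at h
    simp only [Bc, T1eq p hp, e, hA] at h
    simp [e, hZ0, (show ∀ w : V p, g w (Idx.Z ⟨0, hp⟩) = w (Idx.Z ⟨0, hp⟩) from hA)] at h
    exact h
  have hYc : ∀ u : V p, g u Idx.Y = u Idx.Y := by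
    intro u
    have h := h1 (e p Idx.X) (e p Idx.Y) (e p Z0) (e p Idx.X) (fun _ => u)
    simp only [hX, hY] at h
    simp only [Bc, T1eq p hp, hA, hB] at h
    simp [e, hZ0, (show ∀ w : V p, g w (Idx.Z ⟨0, hp⟩) = w (Idx.Z ⟨0, hp⟩) from hA)] at h
    linarith [h]
  have hXc : ∀ u : V p, g u Idx.X = u Idx.X := by
    intro u
    have h := h1 u (e p Idx.Y) (e p Idx.Y) (e p Idx.X) (fun _ => e p Z0)
    simp only [hX, hY] at h
    simp only [Bc, T1eq p hp, hA] at h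
    simp [e, hZ0, (show ∀ w : V p, g w (Idx.Z ⟨0, hp⟩) = w (Idx.Z ⟨0, hp⟩) from hA)] at h
    linarith [h]
  exact ⟨hXc, hYc⟩

lemma bigInv (p i : ℕ) (hpi : p < i) (g : V p ≃ₗ[ℝ] V p)
    (hXc : ∀ u : V p, g u Idx.X = u Idx.X) (hYc : ∀ u : V p, g u Idx.Y = u Idx.Y)
    (u v w x : V p) (η : Fin i → V p) :
    Bc p i (g u) (g v) (g w) (g x) (fun j => g (η j)) = Bc p i u v w x η := by
  simp only [Bc, Tbig p i hpi, hXc, hYc]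

lemma upgrade (p k : ℕ) (hp : 1 ≤ p) (g : V p ≃ₗ[ℝ] V p)
    (hg : GA p p g) (hX : g (e p Idx.X) = e p Idx.X) (hY : g (e p Idx.Y) = e p Idx.Y) :
    GA p k g := by
  obtain ⟨hXc, hYc⟩ := coords p hp g (hg 1 hp) hX hY
  intro i hi u v w x η
  rcases le_or_gt i p with h | h
  · exact hg i h u v w x η
  · exact bigInv p i h g hXc hYc u v w x η

/-- the double isotropy groups coincide:
`G_{X,Y}(𝔄_p) = G_{X,Y}(𝔄_{p+1}) = G_{X,Y}(𝔄_{p+2})` as subgroups of GL(V). -/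
theorem statement12 (p : ℕ) (hp : 1 ≤ p) :
    ({g : V p ≃ₗ[ℝ] V p |
        GA p p g ∧ g (e p Idx.X) = e p Idx.X ∧ g (e p Idx.Y) = e p Idx.Y} =
      {g : V p ≃ₗ[ℝ] V p |
        GA p (p + 1) g ∧ g (e p Idx.X) = e p Idx.X ∧ g (e p Idx.Y) = e p Idx.Y}) ∧
    ({g : V p ≃ₗ[ℝ] V p |
        GA p (p + 1) g ∧ g (e p Idx.X) = e p Idx.X ∧ g (e p Idx.Y) = e p Idx.Y} =
      {g : V p ≃ₗ[ℝ] V p |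
        GA p (p + 2) g ∧ g (e p Idx.X) = e p Idx.X ∧ g (e p Idx.Y) = e p Idx.Y}) := by
  have mono : ∀ (k l : ℕ) (g : V p ≃ₗ[ℝ] V p), k ≤ l → GA p l g → GA p k g :=
    fun k l g hkl hg i hi => hg i (hi.trans hkl)
  constructor <;> ext g <;> simp only [Set.mem_setOf_eq] <;>
    constructor <;> rintro ⟨hg, hX, hY⟩
  · exact ⟨upgrade p (p+1) hp g hg hX hY, hX, hY⟩
  · exact ⟨mono p (p+1) g (by omega) hg, hX, hY⟩
  · exact ⟨upgrade p (p+2) hp g (mono p (p+1) g (by omega) hg) hX hY, hX, hY⟩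
  · exact ⟨mono (p+1) (p+2) g (by omega) hg, hX, hY⟩
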